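/- Generic gates become entangling: Let G be a finite group, let U be a unitary on a finite-dimensional Hilbert space H_S, and define α_g(U) = U_R(g) U U_R(g)† for the right-regular representation U_R on H_S = ℂ^G (with S itself carrying ℂ^G). Consider the controlled unitary K = ∑_{g∈G} |g⟩⟨g|_0 ⊗ α_g(U) on ℂ^G ⊗ H_S. If there exist unitaries V_0, W_0 on ℂ^G and V_S, W_S, U_* on H_S such that (V_0 ⊗ V_S) K (W_0 ⊗ W_S) = 1_0 ⊗ U_*, then all the operators α_g(U), g ∈ G, are pairwise proportional (each pair related by a complex scalar of modulus one). Consequently, if there exist g, h ∈ G such that α_g(U) and α_h(U) are not scalar multiples of each other, then K is not equivalent under local unitaries to a tensor product, i.e., K is a genuinely entangling gate between the frame register and the system S. -/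

import Mathlib

open Matrix Finset Kronecker

/-- The right-regular representation of a finite group `G` on `ℂ^G`:
`U_R(h)|g⟩ = |g h⁻¹⟩`. -/
def rightReg {G : Type*} [Group G] [Fintype G] [DecidableEq G] (h : G) :
    Matrix G G ℂ :=
  Matrix.of fun a b => if a = b * h⁻¹ then 1 else 0

/-- The rank-one projector `|g⟩⟨g|` on `ℂ^G`. -/
def ketbra {G : Type*} [Group G] [Fintype G] [DecidableEq G] (g : G) :
    Matrix G G ℂ :=
  Matrix.of fun a b => if a = g ∧ b = g then 1 else 0

/-- The conjugation action `α_g(U) = U_R(g) U U_R(g)†`. -/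
noncomputable def alphaAct {G : Type*} [Group G] [Fintype G] [DecidableEq G]
    (g : G) (U : Matrix G G ℂ) : Matrix G G ℂ :=
  rightReg g * U * (rightReg g)ᴴ

/-- The controlled unitary `K = ∑_g |g⟩⟨g|_0 ⊗ α_g(U)` on `ℂ^G ⊗ ℂ^G`. -/
noncomputable def ctrlK {G : Type*} [Group G] [Fintype G] [DecidableEq G]
    (U : Matrix G G ℂ) : Matrix (G × G) (G × G) ℂ :=
  ∑ g : G, ketbra g ⊗ₖ alphaAct g U

/-- A matrix is unitary. -/
def IsUnit' {n : Type*} [Fintype n] [DecidableEq n] (A : Matrix n n ℂ) : Prop :=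
  Aᴴ * A = 1 ∧ A * Aᴴ = 1

lemma rightReg_isUnit {G : Type*} [Group G] [Fintype G] [DecidableEq G] (g : G) :
    IsUnit' (rightReg g) := by
  constructor
  · ext a b
    simp only [rightReg, Matrix.mul_apply, Matrix.conjTranspose_apply, Matrix.of_apply,
      Matrix.one_apply, apply_ite (star : ℂ → ℂ), star_one, star_zero,
      eq_mul_inv_iff_mul_eq]
    rw [Finset.sum_eq_single (a * g⁻¹)]
    · simp
    · intro x _ hx
      rw [if_neg, zero_mul]
      intro hc; exact hx (by rw [← hc]; group)
    · simp
  · ext a b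
    simp only [rightReg, Matrix.mul_apply, Matrix.conjTranspose_apply, Matrix.of_apply,
      Matrix.one_apply, apply_ite (star : ℂ → ℂ), star_one, star_zero,
      eq_mul_inv_iff_mul_eq]
    rw [Finset.sum_eq_single (a * g)]
    · simp [eq_comm]
    · intro x _ hx
      rw [if_neg, zero_mul]
      intro hc; exact hx hc.symm
    · simp

lemma IsUnit'_mul {n : Type*} [Fintype n] [DecidableEq n] {A B : Matrix n n ℂ}
    (hA : IsUnit' A) (hB : IsUnit' B) : IsUnit' (A * B) := by
  constructor
  · have : (A*B)ᴴ * (A*B) = Bᴴ * (Aᴴ * A) * B := by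
      simp only [Matrix.conjTranspose_mul]; noncomm_ring
    rw [this, hA.1, Matrix.mul_one, hB.1]
  · have : (A*B) * (A*B)ᴴ = A * (B * Bᴴ) * Aᴴ := by
      simp only [Matrix.conjTranspose_mul]; noncomm_ring
    rw [this, hB.2, Matrix.mul_one, hA.2]

lemma IsUnit'_conjTranspose {n : Type*} [Fintype n] [DecidableEq n] {A : Matrix n n ℂ}
    (hA : IsUnit' A) : IsUnit' Aᴴ := by
  constructor <;> simp [hA.1, hA.2]

lemma alphaAct_isUnit {G : Type*} [Group G] [Fintype G] [DecidableEq G]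
    {U : Matrix G G ℂ} (hU : IsUnit' U) (g : G) : IsUnit' (alphaAct g U) :=
  IsUnit'_mul (IsUnit'_mul (rightReg_isUnit g) hU) (IsUnit'_conjTranspose (rightReg_isUnit g))

lemma key_lemma
    (G : Type*) [Group G] [Fintype G] [DecidableEq G]
    (U : Matrix G G ℂ) (hU : IsUnit' U) :
    (∃ V0 W0 : Matrix G G ℂ, ∃ VS WS Ustar : Matrix G G ℂ,
        IsUnit' V0 ∧ IsUnit' W0 ∧ IsUnit' VS ∧ IsUnit' WS ∧ IsUnit' Ustar ∧
        (V0 ⊗ₖ VS) * ctrlK U * (W0 ⊗ₖ WS) = (1 : Matrix G G ℂ) ⊗ₖ Ustar) →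
      ∀ g h : G, ∃ c : ℂ, ‖c‖ = 1 ∧ alphaAct g U = c • alphaAct h U := by
  rintro ⟨V0, W0, VS, WS, Ustar, hV0, hW0, hVS, hWS, hUs, heq⟩ g h
  set P := V0ᴴ * W0ᴴ with hP
  set Q := VSᴴ * Ustar * WSᴴ with hQdef
  have hK : ctrlK U = P ⊗ₖ Q := by
    calc ctrlK U = 1 * ctrlK U * 1 := by simp
    _ = ((V0ᴴ*V0) ⊗ₖ (VSᴴ*VS)) * ctrlK U * ((W0*W0ᴴ) ⊗ₖ (WS*WSᴴ)) := by
        rw [hV0.1, hVS.1, hW0.2, hWS.2, Matrix.one_kronecker_one]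
    _ = (V0ᴴ ⊗ₖ VSᴴ) * ((V0 ⊗ₖ VS) * ctrlK U * (W0 ⊗ₖ WS)) * (W0ᴴ ⊗ₖ WSᴴ) := by
        rw [Matrix.mul_kronecker_mul, Matrix.mul_kronecker_mul]
        simp only [Matrix.mul_assoc]
    _ = (V0ᴴ ⊗ₖ VSᴴ) * ((1 : Matrix G G ℂ) ⊗ₖ Ustar) * (W0ᴴ ⊗ₖ WSᴴ) := by rw [heq]
    _ = P ⊗ₖ Q := by
        rw [← Matrix.mul_kronecker_mul, ← Matrix.mul_kronecker_mul, Matrix.mul_one]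
  have hA : ∀ k : G, alphaAct k U = P k k • Q := by
    intro k
    ext x y
    have h3 : (ctrlK U) (k, x) (k, y) = (P ⊗ₖ Q) (k, x) (k, y) := by rw [hK]
    simp only [ctrlK, Matrix.sum_apply, Matrix.kroneckerMap_apply, ketbra,
      Matrix.of_apply, and_self, ite_mul, one_mul, zero_mul,
      Finset.sum_ite_eq, Finset.mem_univ, if_true] at h3
    simpa [Matrix.smul_apply] using h3
  have hQ : IsUnit' Q :=
    IsUnit'_mul (IsUnit'_mul (IsUnit'_conjTranspose hVS) hUs) (IsUnit'_conjTranspose hWS)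
  have hnorm : ∀ k : G, ‖P k k‖ = 1 := by
    intro k
    have h1 := (alphaAct_isUnit hU k).1
    rw [hA k, Matrix.conjTranspose_smul, Matrix.smul_mul, Matrix.mul_smul, hQ.1] at h1
    have h2 := congrFun (congrFun (congrArg (fun M => M) h1) 1) 1
    simp only [Matrix.smul_apply, Matrix.one_apply_eq, smul_eq_mul, mul_one] at h2
    have h3 : Complex.normSq (P k k) = 1 := by
      have hcast : (Complex.normSq (P k k) : ℂ) = 1 := by
        rw [Complex.normSq_eq_conj_mul_self, starRingEnd_apply]; exact h2
      exact_mod_cast hcast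
    have h4 : ‖P k k‖ ^ 2 = 1 := by
      rw [Complex.sq_norm, h3]
    nlinarith [norm_nonneg (P k k)]
  have hne : P h h ≠ 0 := by
    intro h0
    have := hnorm h
    rw [h0] at this; simp at this
  refine ⟨P g g / P h h, ?_, ?_⟩
  · rw [norm_div, hnorm g, hnorm h]; norm_num
  · rw [hA g, hA h, smul_smul, div_mul_cancel₀ _ hne]

/-- Generic gates become entangling: if the controlled unitary
`K = ∑_g |g⟩⟨g|_0 ⊗ α_g(U)` is mapped to a tensor product `1_0 ⊗ U_*` by local
unitaries, then all the `α_g(U)` are pairwise proportional by a unimodular scalar.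
Consequently, if two of the `α_g(U)` are not scalar multiples of each other, then
`K` is not equivalent under local unitaries to a tensor product. -/
theorem generic_gates_entangling
    (G : Type*) [Group G] [Fintype G] [DecidableEq G]
    (U : Matrix G G ℂ) (hU : IsUnit' U) :
    ((∃ V0 W0 : Matrix G G ℂ, ∃ VS WS Ustar : Matrix G G ℂ,
        IsUnit' V0 ∧ IsUnit' W0 ∧ IsUnit' VS ∧ IsUnit' WS ∧ IsUnit' Ustar ∧
        (V0 ⊗ₖ VS) * ctrlK U * (W0 ⊗ₖ WS) = (1 : Matrix G G ℂ) ⊗ₖ Ustar) →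
      ∀ g h : G, ∃ c : ℂ, ‖c‖ = 1 ∧ alphaAct g U = c • alphaAct h U) ∧
    ((∃ g h : G, ∀ c : ℂ, alphaAct g U ≠ c • alphaAct h U) →
      ¬ ∃ V0 W0 : Matrix G G ℂ, ∃ VS WS Ustar : Matrix G G ℂ,
        IsUnit' V0 ∧ IsUnit' W0 ∧ IsUnit' VS ∧ IsUnit' WS ∧ IsUnit' Ustar ∧
        (V0 ⊗ₖ VS) * ctrlK U * (W0 ⊗ₖ WS) = (1 : Matrix G G ℂ) ⊗ₖ Ustar) := by
  refine ⟨key_lemma G U hU, ?_⟩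
  rintro ⟨g, h, hgh⟩ hex
  obtain ⟨c, _, hc⟩ := key_lemma G U hU hex g h
  exact hgh c hc
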